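/- There exists an integer N₀ such that for every integer N ≥ N₀ and all real numbers α, β, γ with 0 ≤ α ≤ 1/2, 0 ≤ β ≤ 1/2, and 0 ≤ γ ≤ 1/2, one has ∂L_N/∂α (α, β, γ) ≤ 0 and ∂L_N/∂β (α, β, γ) ≤ 0; that is, under gradient descent the parameters α and β are non-decreasing in this regime. -/

import Mathlib

noncomputable section

/-- `s = exp(β·e^α / (e^α + 2N − 2))`. -/
def sFun (N : ℕ) (α β : ℝ) : ℝ :=
  Real.exp (β * Real.exp α / (Real.exp α + 2 * (N : ℝ) - 2))

/-- `r = s + 2N − 1`. -/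
def rFun (N : ℕ) (α β : ℝ) : ℝ := sFun N α β + 2 * (N : ℝ) - 1

/-- The loss `L_N(α, β, γ) = γ²·(s² + 2N − 1)/r² − 2γ·s/r + 1`. -/
def Lfun (N : ℕ) (α β γ : ℝ) : ℝ :=
  γ ^ 2 * ((sFun N α β) ^ 2 + (2 * (N : ℝ) - 1)) / (rFun N α β) ^ 2 -
    2 * γ * sFun N α β / rFun N α β + 1

/-- The partial derivative `∂L_N/∂α`. -/
def dLalpha (N : ℕ) (α β γ : ℝ) : ℝ := deriv (fun x => Lfun N x β γ) α

/-- The partial derivative `∂L_N/∂β`. -/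
def dLbeta (N : ℕ) (α β γ : ℝ) : ℝ := deriv (fun x => Lfun N α x γ) β

/-- The partial derivative `∂L_N/∂γ`. -/
def dLgamma (N : ℕ) (α β γ : ℝ) : ℝ := deriv (fun x => Lfun N α β x) γ

/-- Derivative of the outer function `g(t) = γ²(t²+M)/(t+M)² − 2γt/(t+M) + 1`. -/
lemma hasDerivAt_g (M γ t : ℝ) (h : t + M ≠ 0) :
    HasDerivAt (fun u : ℝ => γ ^ 2 * (u ^ 2 + M) / (u + M) ^ 2 - 2 * γ * u / (u + M) + 1)
      (2 * γ * M * (γ * (t - 1) - (t + M)) / (t + M) ^ 3) t := by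
  have h4 : HasDerivAt (fun u : ℝ => u + M) 1 t := (hasDerivAt_id t).add_const M
  have h1 : HasDerivAt (fun u : ℝ => γ ^ 2 * (u ^ 2 + M)) (γ ^ 2 * (2 * t)) t := by
    simpa using (((hasDerivAt_pow 2 t).add_const M).const_mul (γ ^ 2))
  have h2 : HasDerivAt (fun u : ℝ => (u + M) ^ 2) (2 * (t + M)) t := by
    simpa using (h4.fun_pow 2)
  have h3 : HasDerivAt (fun u : ℝ => 2 * γ * u) (2 * γ) t := by
    simpa using (hasDerivAt_id t).const_mul (2 * γ)
  have H := ((h1.fun_div h2 (pow_ne_zero 2 h)).fun_sub (h3.fun_div h4 h)).add_const 1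
  refine H.congr_deriv ?_
  field_simp
  ring

theorem stmt12 :
    ∃ N₀ : ℕ, ∀ N : ℕ, N₀ ≤ N → ∀ α β γ : ℝ,
      0 ≤ α → α ≤ 1 / 2 → 0 ≤ β → β ≤ 1 / 2 → 0 ≤ γ → γ ≤ 1 / 2 →
        dLalpha N α β γ ≤ 0 ∧ dLbeta N α β γ ≤ 0 := by
  refine ⟨1, fun N hN α β γ hα hα2 hβ hβ2 hγ hγ2 => ?_⟩
  have hN1 : (1 : ℝ) ≤ (N : ℝ) := by exact_mod_cast hN
  set M : ℝ := 2 * (N : ℝ) - 1 with hM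
  have hM1 : 1 ≤ M := by simp only [hM]; linarith
  have hexp : 0 < Real.exp α := Real.exp_pos α
  have hden : 0 < Real.exp α + 2 * (N : ℝ) - 2 := by linarith
  set s : ℝ := sFun N α β with hs
  have hs1 : 1 ≤ s := by
    rw [hs, sFun]
    have : 0 ≤ β * Real.exp α / (Real.exp α + 2 * (N : ℝ) - 2) :=
      div_nonneg (mul_nonneg hβ hexp.le) hden.le
    exact Real.one_le_exp this
  have hr : 0 < s + M := by linarith
  -- outer derivative is nonpositive
  have hD : 2 * γ * M * (γ * (s - 1) - (s + M)) / (s + M) ^ 3 ≤ 0 := by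
    apply div_nonpos_of_nonpos_of_nonneg
    · have h1 : (1 - γ) * (s - 1) ≥ 0 := mul_nonneg (by linarith) (by linarith)
      have h2 : γ * (s - 1) - (s + M) ≤ 0 := by nlinarith
      have h3 : 0 ≤ 2 * γ * M := by positivity
      exact mul_nonpos_of_nonneg_of_nonpos h3 h2
    · positivity
  -- rewrite L as g ∘ s
  have hfunα : (fun x => Lfun N x β γ) =
      (fun x => γ ^ 2 * ((sFun N x β) ^ 2 + M) / (sFun N x β + M) ^ 2 -
        2 * γ * (sFun N x β) / (sFun N x β + M) + 1) := by
    funext x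
    simp only [Lfun, rFun, hM]
    ring_nf
  have hfunβ : (fun x => Lfun N α x γ) =
      (fun x => γ ^ 2 * ((sFun N α x) ^ 2 + M) / (sFun N α x + M) ^ 2 -
        2 * γ * (sFun N α x) / (sFun N α x + M) + 1) := by
    funext x
    simp only [Lfun, rFun, hM]
    ring_nf
  constructor
  · -- α derivative
    have hinner : HasDerivAt (fun x => β * Real.exp x / (Real.exp x + 2 * (N : ℝ) - 2))
        (β * Real.exp α * (2 * (N : ℝ) - 2) / (Real.exp α + 2 * (N : ℝ) - 2) ^ 2) α := by
      have h1 : HasDerivAt (fun x => β * Real.exp x) (β * Real.exp α) α :=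
        (Real.hasDerivAt_exp α).const_mul β
      have h2 : HasDerivAt (fun x => Real.exp x + 2 * (N : ℝ) - 2) (Real.exp α) α := by
        simpa using ((Real.hasDerivAt_exp α).add_const (2 * (N : ℝ))).sub_const 2
      have H := h1.fun_div h2 hden.ne'
      refine H.congr_deriv ?_
      field_simp
      ring
    have hsd : HasDerivAt (fun x => sFun N x β)
        (s * (β * Real.exp α * (2 * (N : ℝ) - 2) / (Real.exp α + 2 * (N : ℝ) - 2) ^ 2)) α := by
      have := (Real.hasDerivAt_exp (β * Real.exp α / (Real.exp α + 2 * (N : ℝ) - 2))).comp α hinner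
      simpa [sFun, hs, Function.comp_def] using this
    have hL : HasDerivAt (fun x => Lfun N x β γ)
        ((2 * γ * M * (γ * (s - 1) - (s + M)) / (s + M) ^ 3) *
          (s * (β * Real.exp α * (2 * (N : ℝ) - 2) / (Real.exp α + 2 * (N : ℝ) - 2) ^ 2))) α := by
      rw [hfunα]
      exact (hasDerivAt_g M γ s hr.ne').comp α hsd
    rw [dLalpha, hL.deriv]
    apply mul_nonpos_of_nonpos_of_nonneg hD
    have hspos : 0 < s := by linarith
    have hc0 : (0:ℝ) ≤ 2 * (N : ℝ) - 2 := by linarith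
    positivity
  · -- β derivative
    have hinner : HasDerivAt (fun x => x * Real.exp α / (Real.exp α + 2 * (N : ℝ) - 2))
        (Real.exp α / (Real.exp α + 2 * (N : ℝ) - 2)) β := by
      have H := ((hasDerivAt_id β).mul_const (Real.exp α)).div_const
        (Real.exp α + 2 * (N : ℝ) - 2)
      simpa using H
    have hsd : HasDerivAt (fun x => sFun N α x)
        (s * (Real.exp α / (Real.exp α + 2 * (N : ℝ) - 2))) β := by
      have := (Real.hasDerivAt_exp (β * Real.exp α / (Real.exp α + 2 * (N : ℝ) - 2))).comp β hinner
      simpa [sFun, hs, Function.comp_def] using this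
    have hL : HasDerivAt (fun x => Lfun N α x γ)
        ((2 * γ * M * (γ * (s - 1) - (s + M)) / (s + M) ^ 3) *
          (s * (Real.exp α / (Real.exp α + 2 * (N : ℝ) - 2)))) β := by
      rw [hfunβ]
      exact (hasDerivAt_g M γ s hr.ne').comp β hsd
    rw [dLbeta, hL.deriv]
    apply mul_nonpos_of_nonpos_of_nonneg hD
    have hspos : 0 < s := by linarith
    positivity
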